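/- Let X be a finite-dimensional real vector space, L and V real Hilbert spaces, P : X → L and G : X → V linear maps, and S : V → V a continuous self-adjoint linear operator with ⟨S ξ, ξ⟩ ≥ 0 for all ξ ∈ V. Assume there is p ≥ 0 such that ‖P v‖²_L ≤ p² ⟨S G v, G v⟩ for all v ∈ X. Let R : X → X be a linear map satisfying ⟨S G(R u), G v⟩_V = ⟨P u, P v⟩_L for all u, v ∈ X. Let N ≥ 1 be an integer, T > 0, k = T/N, and let w⁰, w¹, …, w^N ∈ X; set δʲ := (wʲ − w^{j−1})/k for j = 1,…,N. Then Σ_{j=1}^N k ⟨S G(R δʲ), G(R δʲ)⟩ + (1 + p²/T) Σ_{j=1}^N k ⟨S G wʲ, G wʲ⟩ ≥ ‖P w^N‖²_L. -/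

import Mathlib

open scoped RealInnerProductSpace

lemma telescope_aux (f : ℕ → ℝ) (j : ℕ) :
    ∀ n, j ≤ n → f n = f j + ∑ i ∈ Finset.Icc (j + 1) n, (f i - f (i - 1)) := by
  intro n hn
  induction n, hn using Nat.le_induction with
  | base => simp
  | succ n hn ih =>
      rw [Finset.sum_Icc_succ_top (by omega), ← add_assoc, ← ih]
      simp

/-- Estimate (4.6) of Lemma 4.2:
`Σ k⟨S G(R δʲ), G(R δʲ)⟩ + (1 + p²/T) Σ k⟨S G wʲ, G wʲ⟩ ≥ ‖P w^N‖²`. -/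
theorem stmt6 {X : Type*} [AddCommGroup X] [Module ℝ X] [FiniteDimensional ℝ X]
    {L V : Type*} [NormedAddCommGroup L] [InnerProductSpace ℝ L] [CompleteSpace L]
    [NormedAddCommGroup V] [InnerProductSpace ℝ V] [CompleteSpace V]
    (P : X →ₗ[ℝ] L) (G : X →ₗ[ℝ] V) (S : V →L[ℝ] V) (hS : IsSelfAdjoint S)
    (hSpos : ∀ ξ : V, 0 ≤ ⟪S ξ, ξ⟫)
    (p : ℝ) (hp : 0 ≤ p) (hP : ∀ v : X, ‖P v‖ ^ 2 ≤ p ^ 2 * ⟪S (G v), G v⟫)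
    (R : X →ₗ[ℝ] X) (hR : ∀ u v : X, ⟪S (G (R u)), G v⟫ = ⟪P u, P v⟫)
    (N : ℕ) (hN : 1 ≤ N) (T : ℝ) (hT : 0 < T) (k : ℝ) (hk : k = T / N)
    (w : ℕ → X) (δ : ℕ → X)
    (hδ : ∀ j, 1 ≤ j → j ≤ N → δ j = k⁻¹ • (w j - w (j - 1))) :
    ‖P (w N)‖ ^ 2 ≤
      (∑ j ∈ Finset.Icc 1 N, k * ⟪S (G (R (δ j))), G (R (δ j))⟫) +
      (1 + p ^ 2 / T) * ∑ j ∈ Finset.Icc 1 N, k * ⟪S (G (w j)), G (w j)⟫ := by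
  have hNpos : (0:ℝ) < N := by exact_mod_cast hN
  have hkpos : 0 < k := by rw [hk]; positivity
  have hsym : ∀ ξ η : V, ⟪S ξ, η⟫ = ⟪S η, ξ⟫ := by
    intro ξ η
    have h := (ContinuousLinearMap.isSelfAdjoint_iff_isSymmetric.mp hS) ξ η
    exact h.trans (real_inner_comm (S η) ξ)
  -- Cauchy-Schwarz-type estimate for the semidefinite form
  have hcs : ∀ ξ η : V, 2 * ⟪S ξ, η⟫ ≤ ⟪S ξ, ξ⟫ + ⟪S η, η⟫ := by
    intro ξ η
    have h := hSpos (ξ - η)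
    simp only [map_sub, inner_sub_left, inner_sub_right] at h
    rw [hsym η ξ] at h
    linarith
  set f : ℕ → ℝ := fun i => ‖P (w i)‖ ^ 2 with hf
  set b : ℕ → ℝ := fun i =>
    k * ⟪S (G (R (δ i))), G (R (δ i))⟫ + k * ⟪S (G (w i)), G (w i)⟫ with hb
  have hbnonneg : ∀ i, 0 ≤ b i := by
    intro i
    have h1 := hSpos (G (R (δ i)))
    have h2 := hSpos (G (w i))
    have := hkpos.le
    positivity
  -- per-step difference bound
  have hdiff : ∀ i, 1 ≤ i → i ≤ N → f i - f (i - 1) ≤ b i := by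
    intro i h1 h2
    have hwi : w (i - 1) = w i - k • δ i := by
      rw [hδ i h1 h2, smul_smul, mul_inv_cancel₀ hkpos.ne', one_smul]
      abel
    have hexp : f i - f (i - 1) = 2 * (k * ⟪P (δ i), P (w i)⟫) - ‖k • P (δ i)‖ ^ 2 := by
      simp only [hf, hwi, map_sub, map_smul]
      rw [← real_inner_self_eq_norm_sq (P (w i) - k • P (δ i)),
        ← real_inner_self_eq_norm_sq (P (w i)), ← real_inner_self_eq_norm_sq (k • P (δ i)),
        inner_sub_left, inner_sub_right, inner_sub_right,
        real_inner_comm (k • P (δ i)) (P (w i)), real_inner_smul_left, real_inner_comm]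
      ring
    have h2k : 2 * ⟪P (δ i), P (w i)⟫ ≤ ⟪S (G (R (δ i))), G (R (δ i))⟫
        + ⟪S (G (w i)), G (w i)⟫ := by
      have := hcs (G (R (δ i))) (G (w i))
      rw [hR (δ i) (w i)] at this
      exact this
    have hnn : (0:ℝ) ≤ ‖k • P (δ i)‖ ^ 2 := by positivity
    have : 2 * (k * ⟪P (δ i), P (w i)⟫) ≤ b i := by
      simp only [hb]
      nlinarith [hkpos]
    linarith [hexp ▸ (by linarith : f i - f (i - 1) ≤ 2 * (k * ⟪P (δ i), P (w i)⟫))]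
  set B : ℝ := ∑ i ∈ Finset.Icc 1 N, b i with hB
  -- for every j in [1, N], f N ≤ f j + B
  have hkey : ∀ j ∈ Finset.Icc 1 N, f N ≤ f j + B := by
    intro j hj
    rw [Finset.mem_Icc] at hj
    have htel := telescope_aux f j N hj.2
    have hsum : ∑ i ∈ Finset.Icc (j + 1) N, (f i - f (i - 1)) ≤ B := by
      calc ∑ i ∈ Finset.Icc (j + 1) N, (f i - f (i - 1))
          ≤ ∑ i ∈ Finset.Icc (j + 1) N, b i := by
            apply Finset.sum_le_sum
            intro i hi
            rw [Finset.mem_Icc] at hi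
            exact hdiff i (by omega) hi.2
        _ ≤ B := by
            apply Finset.sum_le_sum_of_subset_of_nonneg
            · apply Finset.Icc_subset_Icc_left; omega
            · intro i _ _; exact hbnonneg i
    linarith
  -- sum over j and use hP
  have hsumkey : (N : ℝ) * f N ≤ (∑ j ∈ Finset.Icc 1 N, f j) + (N : ℝ) * B := by
    have := Finset.sum_le_sum hkey
    rw [Finset.sum_const, Nat.card_Icc, Finset.sum_add_distrib, Finset.sum_const,
      Nat.card_Icc] at this
    simpa [nsmul_eq_mul] using this
  have hPsum : (∑ j ∈ Finset.Icc 1 N, f j)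
      ≤ p ^ 2 * ∑ j ∈ Finset.Icc 1 N, ⟪S (G (w j)), G (w j)⟫ := by
    rw [Finset.mul_sum]
    exact Finset.sum_le_sum fun j _ => hP (w j)
  -- conclude
  have hdivN : f N ≤ (p ^ 2 / N) * (∑ j ∈ Finset.Icc 1 N, ⟪S (G (w j)), G (w j)⟫) + B := by
    rw [div_mul_eq_mul_div]
    rw [← sub_nonneg]
    have : 0 ≤ ((p ^ 2 * ∑ j ∈ Finset.Icc 1 N, ⟪S (G (w j)), G (w j)⟫) + (N:ℝ) * B
        - (N : ℝ) * f N) / N := by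
      apply div_nonneg _ hNpos.le
      linarith
    calc (0:ℝ) ≤ _ := this
      _ = p ^ 2 * (∑ j ∈ Finset.Icc 1 N, ⟪S (G (w j)), G (w j)⟫) / N + B - f N := by
          field_simp
  have hcoef : p ^ 2 / N = (p ^ 2 / T) * k := by
    rw [hk]; field_simp
  have hBsplit : B = (∑ j ∈ Finset.Icc 1 N, k * ⟪S (G (R (δ j))), G (R (δ j))⟫)
      + ∑ j ∈ Finset.Icc 1 N, k * ⟪S (G (w j)), G (w j)⟫ := by
    rw [hB, Finset.sum_add_distrib]
  have hfinal : (p ^ 2 / N) * (∑ j ∈ Finset.Icc 1 N, ⟪S (G (w j)), G (w j)⟫)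
      = (p ^ 2 / T) * ∑ j ∈ Finset.Icc 1 N, k * ⟪S (G (w j)), G (w j)⟫ := by
    rw [hcoef, Finset.mul_sum, Finset.mul_sum]
    congr 1; ext j; ring
  calc ‖P (w N)‖ ^ 2 = f N := rfl
    _ ≤ (p ^ 2 / N) * (∑ j ∈ Finset.Icc 1 N, ⟪S (G (w j)), G (w j)⟫) + B := hdivN
    _ = (∑ j ∈ Finset.Icc 1 N, k * ⟪S (G (R (δ j))), G (R (δ j))⟫)
        + (1 + p ^ 2 / T) * ∑ j ∈ Finset.Icc 1 N, k * ⟪S (G (w j)), G (w j)⟫ := by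
      rw [hfinal, hBsplit]; ring
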